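/- arXiv:1710.11408 — 7 statements merged into one kernel-verified Lean document; each statement's English description precedes it below -/
import Mathlib

section
/- With t₀ < t_m, boundary data L, v⁰, v_srz, and p* the cubic satisfying those boundary conditions, if f : [t₀,t_m] → ℝ is C², satisfies the same boundary conditions, and ∫_{t₀}^{t_m} (f''(t))² dt = ∫_{t₀}^{t_m} (p*''(t))² dt, then f(t) = p*(t) for all t ∈ [t₀,t_m]; that is, the cubic is the unique minimizer of the control-effort cost among admissible trajectories. -/
set_option maxHeartbeats 1000000

open MeasureTheory intervalIntegral

private lemma cubic_hasDerivAt (a b c d t : ℝ) :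
    HasDerivAt (fun t => (1/6) * a * t^3 + (1/2) * b * t^2 + c * t + d)
      ((1/2) * a * t^2 + b * t + c) t := by
  have h := (((hasDerivAt_pow 3 t).const_mul ((1/6) * a)).add
      ((hasDerivAt_pow 2 t).const_mul ((1/2) * b))).add
      (((hasDerivAt_id t).const_mul c).add_const d)
  convert h using 1
  · rfl
  · rfl
  · funext x; simp only [Pi.add_apply, id_eq]; ring
  · push_cast; ring

private lemma quad_hasDerivAt (a b c t : ℝ) :
    HasDerivAt (fun t => (1/2) * a * t^2 + b * t + c) (a * t + b) t := by
  have h := (((hasDerivAt_pow 2 t).const_mul ((1/2) * a)).add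
      ((hasDerivAt_id t).const_mul b)).add_const c
  convert h using 1
  · rfl
  · rfl
  · rfl
  push_cast; ring

/-- The cubic `p* t = (1/6) a t³ + (1/2) b t² + c t + d` satisfying the boundary
conditions is the *unique* minimizer of the control effort: if an admissible C²
trajectory `f` with the same boundary conditions achieves the same cost
`∫ (f'')² = ∫ (p*'')²`, then `f` coincides with the cubic on `[t₀, tm]`. -/
theorem cubic_unique_minimizer_of_control_effort
    (t₀ tm L v0 vsrz a b c d : ℝ) (hlt : t₀ < tm)
    (hp0 : (1/6) * a * t₀^3 + (1/2) * b * t₀^2 + c * t₀ + d = 0)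
    (hp1 : (1/6) * a * tm^3 + (1/2) * b * tm^2 + c * tm + d = L)
    (hv0 : (1/2) * a * t₀^2 + b * t₀ + c = v0)
    (hv1 : (1/2) * a * tm^2 + b * tm + c = vsrz)
    (f f' f'' : ℝ → ℝ)
    (hd1 : ∀ t ∈ Set.Icc t₀ tm, HasDerivAt f (f' t) t)
    (hd2 : ∀ t ∈ Set.Icc t₀ tm, HasDerivAt f' (f'' t) t)
    (hcont : ContinuousOn f'' (Set.Icc t₀ tm))
    (hf0 : f t₀ = 0) (hf1 : f tm = L)
    (hfv0 : f' t₀ = v0) (hfv1 : f' tm = vsrz)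
    (hcost : ∫ t in t₀..tm, (f'' t)^2 = ∫ t in t₀..tm, (a * t + b)^2) :
    ∀ t ∈ Set.Icc t₀ tm,
      f t = (1/6) * a * t^3 + (1/2) * b * t^2 + c * t + d := by
  have hle : t₀ ≤ tm := hlt.le
  have huIcc : Set.uIcc t₀ tm = Set.Icc t₀ tm := Set.uIcc_of_le hle
  set P : ℝ → ℝ := fun t => (1/6) * a * t^3 + (1/2) * b * t^2 + c * t + d with hP
  set P' : ℝ → ℝ := fun t => (1/2) * a * t^2 + b * t + c with hP'
  set q : ℝ → ℝ := fun t => f'' t - (a * t + b) with hq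
  -- continuity facts
  have hcf' : ContinuousOn f' (Set.Icc t₀ tm) :=
    fun t ht => (hd2 t ht).continuousAt.continuousWithinAt
  have hcf : ContinuousOn f (Set.Icc t₀ tm) :=
    fun t ht => (hd1 t ht).continuousAt.continuousWithinAt
  have hlin : Continuous (fun t : ℝ => a * t + b) := by continuity
  have hcq : ContinuousOn q (Set.Icc t₀ tm) := hcont.sub hlin.continuousOn
  -- cross term is zero, by integration by parts
  have hcross : (∫ t in t₀..tm, (a * t + b) * q t) = 0 := by
    have hderiv : ∀ t ∈ Set.uIcc t₀ tm,
        HasDerivAt (fun t => (a * t + b) * (f' t - P' t) - a * (f t - P t))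
          ((a * t + b) * q t) t := by
      intro t ht
      rw [huIcc] at ht
      have h1 : HasDerivAt (fun t : ℝ => a * t + b) a t := by
        simpa using ((hasDerivAt_id t).const_mul a).add_const b
      have h2 : HasDerivAt (fun t => f' t - P' t) (f'' t - (a * t + b)) t :=
        (hd2 t ht).sub (quad_hasDerivAt a b c t)
      have h3 : HasDerivAt (fun t => f t - P t) (f' t - P' t) t :=
        (hd1 t ht).sub (cubic_hasDerivAt a b c d t)
      have h := (h1.mul h2).sub (h3.const_mul a)
      convert h using 1
      · rfl
      · rfl
      · rfl
      simp only [hq]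
      ring
    have hint : IntervalIntegrable (fun t => (a * t + b) * q t) volume t₀ tm :=
      ((hlin.continuousOn.mul hcq).mono (by rw [huIcc])).intervalIntegrable
    rw [intervalIntegral.integral_eq_sub_of_hasDerivAt hderiv hint]
    have e0 : P t₀ = 0 := hp0
    have e1 : P tm = L := hp1
    have e2 : P' t₀ = v0 := hv0
    have e3 : P' tm = vsrz := hv1
    rw [e0, e1, e2, e3, hf0, hf1, hfv0, hfv1]
    ring
  -- integrability
  have hiq : IntervalIntegrable q volume t₀ tm :=
    (hcq.mono (by rw [huIcc])).intervalIntegrable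
  have hiq2 : IntervalIntegrable (fun t => (q t)^2) volume t₀ tm :=
    ((hcq.pow 2).mono (by rw [huIcc])).intervalIntegrable
  have hicross : IntervalIntegrable (fun t => (a * t + b) * q t) volume t₀ tm :=
    ((hlin.continuousOn.mul hcq).mono (by rw [huIcc])).intervalIntegrable
  have hilin2 : IntervalIntegrable (fun t => (a * t + b)^2) volume t₀ tm :=
    ((hlin.pow 2).continuousOn.mono (by rw [huIcc])).intervalIntegrable
  -- ∫ q² = 0
  have hq0 : (∫ t in t₀..tm, (q t)^2) = 0 := by
    have hexp : (∫ t in t₀..tm, (f'' t)^2)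
        = (∫ t in t₀..tm, ((q t)^2 + ((2 * ((a * t + b) * q t)) + (a * t + b)^2))) := by
      apply intervalIntegral.integral_congr
      intro t _
      simp only [hq]
      ring
    rw [intervalIntegral.integral_add hiq2 ((hicross.const_mul 2).add hilin2),
      intervalIntegral.integral_add (hicross.const_mul 2) hilin2,
      intervalIntegral.integral_const_mul, hcross] at hexp
    rw [hcost] at hexp
    linarith
  -- q = 0 a.e. on Ioc
  have hqae : q =ᵐ[volume.restrict (Set.Ioc t₀ tm)] 0 := by
    rw [intervalIntegral.integral_of_le hle] at hq0
    have hnn : (0 : ℝ → ℝ) ≤ fun t => (q t)^2 := fun t => sq_nonneg _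
    have hint : Integrable (fun t => (q t)^2) (volume.restrict (Set.Ioc t₀ tm)) := hiq2.1
    have := (MeasureTheory.integral_eq_zero_iff_of_nonneg hnn hint).mp hq0
    filter_upwards [this] with t ht
    exact pow_eq_zero_iff (n := 2) (by norm_num) |>.mp ht
  -- f' = P' on Icc
  have hf'eq : ∀ t ∈ Set.Icc t₀ tm, f' t = P' t := by
    intro t ht
    have hsub : Set.uIcc t₀ t ⊆ Set.Icc t₀ tm := by
      rw [Set.uIcc_of_le ht.1]
      exact Set.Icc_subset_Icc le_rfl ht.2
    have hderiv : ∀ s ∈ Set.uIcc t₀ t, HasDerivAt (fun s => f' s - P' s) (q s) s :=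
      fun s hs => (hd2 s (hsub hs)).sub (quad_hasDerivAt a b c s)
    have hint : IntervalIntegrable q volume t₀ t :=
      ((hcq.mono hsub)).intervalIntegrable
    have heq := intervalIntegral.integral_eq_sub_of_hasDerivAt hderiv hint
    have hz : (∫ s in t₀..t, q s) = 0 := by
      rw [intervalIntegral.integral_of_le ht.1]
      have hae : q =ᵐ[volume.restrict (Set.Ioc t₀ t)] 0 :=
        MeasureTheory.ae_restrict_of_ae_restrict_of_subset
          (Set.Ioc_subset_Ioc le_rfl ht.2) hqae
      exact MeasureTheory.integral_eq_zero_of_ae hae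
    rw [hz] at heq
    have h0 : f' t₀ - P' t₀ = 0 := by
      have : P' t₀ = v0 := hv0
      rw [this, hfv0]; ring
    have := heq.symm
    linarith [this, h0]
  -- f = P on Icc
  intro t ht
  have hsub : Set.uIcc t₀ t ⊆ Set.Icc t₀ tm := by
    rw [Set.uIcc_of_le ht.1]
    exact Set.Icc_subset_Icc le_rfl ht.2
  have hderiv : ∀ s ∈ Set.uIcc t₀ t, HasDerivAt (fun s => f s - P s) (f' s - P' s) s :=
    fun s hs => (hd1 s (hsub hs)).sub (cubic_hasDerivAt a b c d s)
  have hcP' : Continuous P' := by simp only [hP']; continuity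
  have hint : IntervalIntegrable (fun s => f' s - P' s) volume t₀ t :=
    ((hcf'.sub hcP'.continuousOn).mono hsub).intervalIntegrable
  have heq := intervalIntegral.integral_eq_sub_of_hasDerivAt hderiv hint
  have hz : (∫ s in t₀..t, (f' s - P' s)) = 0 := by
    rw [intervalIntegral.integral_congr (g := fun _ => (0:ℝ))
      (fun s hs => by rw [hf'eq s (hsub hs)]; ring)]
    simp
  rw [hz] at heq
  have h0 : f t₀ - P t₀ = 0 := by
    have : P t₀ = 0 := hp0
    rw [this, hf0]; ring
  have heq' : f t - P t - (f t₀ - P t₀) = 0 := by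
    have := heq.symm
    simpa using this
  have hfin : f t - P t = 0 := by linarith
  have := sub_eq_zero.mp hfin
  simpa [hP] using this
end

section
/- Let (x,y) : ℝ → ℝ² be a differentiable solution of the straight-road lane-tracking vector field, i.e. x'(t) = dX + p(x₀ − x − s·dX) and y'(t) = dY + p(y₀ − y − s·dY) with s = (x₀−x)dX + (y₀−y)dY, where dX² + dY² = 1. Then the signed perpendicular distance η(t) = −(x(t)−x₀)dY + (y(t)−y₀)dX satisfies η'(t) = −p·η(t) for all t. -/
/-- Along any differentiable solution of the straight-road lane-tracking vector
field (anchor `(x₀, y₀)`, unit direction `(dX, dY)`, gain `p`), the signed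
perpendicular distance `η t = -(x t - x₀) * dY + (y t - y₀) * dX` satisfies
`η' = -p * η`. -/
theorem straight_lane_perpendicular_error_ode
    (x₀ y₀ dX dY p : ℝ) (hunit : dX^2 + dY^2 = 1)
    (x y : ℝ → ℝ)
    (hx : ∀ t, HasDerivAt x
      (dX + p * (x₀ - x t - ((x₀ - x t) * dX + (y₀ - y t) * dY) * dX)) t)
    (hy : ∀ t, HasDerivAt y
      (dY + p * (y₀ - y t - ((x₀ - x t) * dX + (y₀ - y t) * dY) * dY)) t) :
    ∀ t, HasDerivAt (fun s => -(x s - x₀) * dY + (y s - y₀) * dX)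
      (-p * (-(x t - x₀) * dY + (y t - y₀) * dX)) t := by
  intro t
  have h := (((hx t).sub_const x₀).neg.mul_const dY).add (((hy t).sub_const y₀).mul_const dX)
  refine h.congr_deriv ?_
  have h1 : dY^2 = 1 - dX^2 := by linarith
  ring_nf
end

section
/- Let (x,y) : ℝ → ℝ² be a differentiable solution of the straight-road lane-tracking vector field defined for all t ≥ 0, with gain p > 0. Then the signed perpendicular distance satisfies η(t) = η(0)·e^{−p t} for all t ≥ 0; in particular η(t) → 0 as t → ∞, so the trajectory converges to the road's center line, and larger values of p give faster exponential convergence. -/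
/-- For a solution of the straight-road lane-tracking vector field defined for all
`t ≥ 0` with gain `p > 0`, the signed perpendicular distance decays exponentially:
`η t = η 0 * exp (-p * t)` for all `t ≥ 0`, and in particular `η t → 0` as
`t → ∞`, so the trajectory converges to the road's center line (larger `p`
giving a faster exponential rate `exp (-p * t)`). -/
theorem straight_lane_perpendicular_error_exponential_decay
    (x₀ y₀ dX dY p : ℝ) (hunit : dX^2 + dY^2 = 1) (hp : 0 < p)
    (x y : ℝ → ℝ)
    (hx : ∀ t ∈ Set.Ici (0:ℝ), HasDerivAt x
      (dX + p * (x₀ - x t - ((x₀ - x t) * dX + (y₀ - y t) * dY) * dX)) t)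
    (hy : ∀ t ∈ Set.Ici (0:ℝ), HasDerivAt y
      (dY + p * (y₀ - y t - ((x₀ - x t) * dX + (y₀ - y t) * dY) * dY)) t) :
    (∀ t ∈ Set.Ici (0:ℝ),
      -(x t - x₀) * dY + (y t - y₀) * dX
        = (-(x 0 - x₀) * dY + (y 0 - y₀) * dX) * Real.exp (-p * t)) ∧
    Filter.Tendsto (fun t => -(x t - x₀) * dY + (y t - y₀) * dX)
      Filter.atTop (nhds 0) := by
  set η : ℝ → ℝ := fun t => -(x t - x₀) * dY + (y t - y₀) * dX with hη
  have hη' : ∀ t ∈ Set.Ici (0:ℝ), HasDerivAt η (-p * η t) t := by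
    intro t ht
    have h := ((hx t ht).const_mul (-dY)).add ((hy t ht).const_mul dX)
    have heq : (-dY) * (dX + p * (x₀ - x t - ((x₀ - x t) * dX + (y₀ - y t) * dY) * dX))
        + dX * (dY + p * (y₀ - y t - ((x₀ - x t) * dX + (y₀ - y t) * dY) * dY))
        = -p * η t := by simp only [hη]; ring
    have heq2 : η = fun t => (-dY) * x t + dX * y t + (x₀ * dY - y₀ * dX) := by
      funext s; simp only [hη]; ring
    rw [heq2]
    exact (h.add_const (x₀ * dY - y₀ * dX)).congr_deriv (by simp only [hη] at heq ⊢; ring)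
  -- compensated function is constant on [0, t]
  have key : ∀ t ∈ Set.Ici (0:ℝ), η t = η 0 * Real.exp (-p * t) := by
    intro t ht
    set g : ℝ → ℝ := fun s => η s * Real.exp (p * s) with hg
    have hgderiv : ∀ s ∈ Set.Ici (0:ℝ), HasDerivAt g 0 s := by
      intro s hs
      have he : HasDerivAt (fun s => Real.exp (p * s)) (p * Real.exp (p * s)) s := by
        exact ((Real.hasDerivAt_exp (p * s)).comp s
          ((hasDerivAt_id s).const_mul p)).congr_deriv (by ring)
      have := (hη' s hs).mul he
      exact this.congr_deriv (by ring)
    have hconst : g t = g 0 := by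
      have hcont : ContinuousOn g (Set.Icc 0 t) := fun s hs =>
        (hgderiv s (Set.mem_Ici.mpr hs.1)).continuousAt.continuousWithinAt
      have := constant_of_has_deriv_right_zero hcont (fun s hs =>
        (hgderiv s (Set.mem_Ici.mpr hs.1)).hasDerivWithinAt) t
          (Set.mem_Icc.mpr ⟨ht, le_refl t⟩)
      exact this
    have : η t * Real.exp (p * t) = η 0 := by simpa [hg] using hconst
    have hexp : Real.exp (p * t) ≠ 0 := Real.exp_ne_zero _
    field_simp [Real.exp_neg] at *
    rw [Real.exp_neg, ← this, mul_assoc, mul_inv_cancel₀ hexp, mul_one]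
  refine ⟨key, ?_⟩
  have hlim : Filter.Tendsto (fun t => η 0 * Real.exp (-p * t)) Filter.atTop (nhds 0) := by
    have h1 : Filter.Tendsto (fun t : ℝ => -p * t) Filter.atTop Filter.atBot := by
      simpa using Filter.Tendsto.const_mul_atTop_of_neg
        (by linarith : -p < 0) (Filter.tendsto_id (α := ℝ))
    have : Filter.Tendsto (fun t => Real.exp (-p * t)) Filter.atTop (nhds 0) :=
      Real.tendsto_exp_atBot.comp h1
    simpa using this.const_mul (η 0)
  exact Filter.Tendsto.congr' (by
    filter_upwards [Filter.eventually_ge_atTop (0:ℝ)] with t ht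
    exact (key t ht).symm) hlim
end

section
/- Let (x,y) : ℝ → ℝ² be a differentiable solution of the straight-road lane-tracking vector field whose initial point lies on the road's center line, i.e. η(0) = 0. Then for all t, (x'(t), y'(t)) = (dX, dY); consequently x(t) = x(0) + t·dX and y(t) = y(0) + t·dY, so the trajectory moves along the center line at unit speed in the direction of the road. -/
/-- If a differentiable solution of the straight-road lane-tracking vector field
starts on the road's center line (`η 0 = 0`), then for all `t` its velocity is
exactly the unit road direction `(dX, dY)`, and hence
`x t = x 0 + t * dX` and `y t = y 0 + t * dY`: the trajectory moves along the
center line at unit speed in the direction of the road. -/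
theorem straight_lane_on_centerline_moves_along_road
    (x₀ y₀ dX dY p : ℝ) (hunit : dX^2 + dY^2 = 1)
    (x y : ℝ → ℝ)
    (hx : ∀ t, HasDerivAt x
      (dX + p * (x₀ - x t - ((x₀ - x t) * dX + (y₀ - y t) * dY) * dX)) t)
    (hy : ∀ t, HasDerivAt y
      (dY + p * (y₀ - y t - ((x₀ - x t) * dX + (y₀ - y t) * dY) * dY)) t)
    (h0 : -(x 0 - x₀) * dY + (y 0 - y₀) * dX = 0) :
    ∀ t, HasDerivAt x dX t ∧ HasDerivAt y dY t ∧
      x t = x 0 + t * dX ∧ y t = y 0 + t * dY := by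
  set η : ℝ → ℝ := fun t => (x₀ - x t) * dY - (y₀ - y t) * dX with hη
  have hη0 : η 0 = 0 := by simp only [hη]; linarith
  have hηd : ∀ t, HasDerivAt η (-p * η t) t := by
    intro t
    have h := (((hx t).const_sub x₀).mul_const dY).sub
      (((hy t).const_sub y₀).mul_const dX)
    refine h.congr_deriv ?_
    simp only [hη]
    ring
  -- g t = η t * exp (p t) is constant
  have hg : ∀ t, HasDerivAt (fun t => η t * Real.exp (p * t)) 0 t := by
    intro t
    have he : HasDerivAt (fun t => Real.exp (p * t)) (p * Real.exp (p * t)) t := by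
      have := (Real.hasDerivAt_exp (p * t)).comp t ((hasDerivAt_id t).const_mul p)
      exact this.congr_deriv (by ring)
    have := (hηd t).mul he
    refine this.congr_deriv ?_
    ring
  have hconst : ∀ t, η t * Real.exp (p * t) = 0 := by
    intro t
    have : (fun t => η t * Real.exp (p * t)) t = (fun t => η t * Real.exp (p * t)) 0 :=
      is_const_of_deriv_eq_zero (fun s => (hg s).differentiableAt)
        (fun s => (hg s).deriv) t 0
    simpa [hη0] using this
  have hηz : ∀ t, η t = 0 := by
    intro t
    have := hconst t
    have he := Real.exp_ne_zero (p * t)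
    exact (mul_eq_zero.mp this).resolve_right he
  have hxd : ∀ t, HasDerivAt x dX t := by
    intro t
    have h := hx t
    have hz : x₀ - x t - ((x₀ - x t) * dX + (y₀ - y t) * dY) * dX = dY * η t := by
      simp only [hη]; linear_combination (x t - x₀) * hunit
    rw [hz, hηz t] at h
    simpa using h
  have hyd : ∀ t, HasDerivAt y dY t := by
    intro t
    have h := hy t
    have hz : y₀ - y t - ((x₀ - x t) * dX + (y₀ - y t) * dY) * dY = -dX * η t := by
      simp only [hη]; linear_combination (y t - y₀) * hunit
    rw [hz, hηz t] at h
    simpa using h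
  intro t
  refine ⟨hxd t, hyd t, ?_, ?_⟩
  · have h : ∀ s, HasDerivAt (fun s => x s - s * dX) 0 s := by
      intro s
      have := (hxd s).sub ((hasDerivAt_id s).mul_const dX)
      exact this.congr_deriv (by simp)
    have := is_const_of_deriv_eq_zero (fun s => (h s).differentiableAt)
      (fun s => (h s).deriv) t 0
    linarith
  · have h : ∀ s, HasDerivAt (fun s => y s - s * dY) 0 s := by
      intro s
      have := (hyd s).sub ((hasDerivAt_id s).mul_const dY)
      exact this.congr_deriv (by simp)
    have := is_const_of_deriv_eq_zero (fun s => (h s).differentiableAt)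
      (fun s => (h s).deriv) t 0
    linarith
end

section
/- Let (x,y) : ℝ → ℝ² be a differentiable solution of the arc lane-tracking vector field whose initial point lies on the circle, i.e. (x(0)−x_c)² + (y(0)−y_c)² = r². Then (x(t)−x_c)² + (y(t)−y_c)² = r² for all t (the circle is invariant), and along the circle the speed is constant: (x'(t))² + (y'(t))² = r⁴ for all t. -/
/-- If a differentiable solution of the arc lane-tracking vector field starts on
the target circle, then it stays on the circle for all time (the circle is
invariant), and along the circle the speed is constant:
`(x' t)² + (y' t)² = r⁴`. -/
theorem arc_lane_circle_invariant_and_constant_speed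
    (xc yc r cw p : ℝ) (hr : 0 < r) (hcw : cw = 1 ∨ cw = -1)
    (x y : ℝ → ℝ)
    (hx : ∀ t, HasDerivAt x
      (r * (y t - yc) * cw
        - 4 * p * (x t - xc) * ((x t - xc)^2 + (y t - yc)^2 - r^2)) t)
    (hy : ∀ t, HasDerivAt y
      (-(r * (x t - xc) * cw)
        - 4 * p * (y t - yc) * ((x t - xc)^2 + (y t - yc)^2 - r^2)) t)
    (h0 : (x 0 - xc)^2 + (y 0 - yc)^2 = r^2) :
    ∀ t, (x t - xc)^2 + (y t - yc)^2 = r^2 ∧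
      (deriv x t)^2 + (deriv y t)^2 = r^4 := by
  set ρ : ℝ → ℝ := fun t => (x t - xc)^2 + (y t - yc)^2 - r^2 with hρdef
  set c : ℝ → ℝ := fun t => -8 * p * ((x t - xc)^2 + (y t - yc)^2) with hcdef
  have hcx : Continuous x := Differentiable.continuous (fun t => (hx t).differentiableAt)
  have hcy : Continuous y := Differentiable.continuous (fun t => (hy t).differentiableAt)
  have hcc : Continuous c := by
    apply Continuous.mul continuous_const
    exact ((hcx.sub continuous_const).pow 2).add ((hcy.sub continuous_const).pow 2)
  set C : ℝ → ℝ := fun t => ∫ s in (0:ℝ)..t, c s with hCdef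
  have hC : ∀ t, HasDerivAt C (c t) t := fun t =>
    (hcc.integral_hasStrictDerivAt 0 t).hasDerivAt
  have hρ : ∀ t, HasDerivAt ρ (c t * ρ t) t := by
    intro t
    have h1 := (((hx t).sub_const xc).pow 2).add (((hy t).sub_const yc).pow 2)
    have h2 := h1.sub_const (r^2)
    refine h2.congr_deriv ?_
    simp only [hρdef, hcdef]
    ring
  have hg : ∀ t, HasDerivAt (fun t => ρ t * Real.exp (-(C t))) 0 t := by
    intro t
    have := (hρ t).mul (((hC t).neg).exp)
    refine this.congr_deriv ?_
    ring
  have hconst : ∀ t, ρ t * Real.exp (-(C t)) = ρ 0 * Real.exp (-(C 0)) := by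
    intro t
    exact is_const_of_deriv_eq_zero (fun s => (hg s).differentiableAt)
      (fun s => (hg s).deriv) t 0
  have hρ0 : ρ 0 = 0 := by simp [hρdef, h0]
  have hρz : ∀ t, ρ t = 0 := by
    intro t
    have := hconst t
    rw [hρ0, zero_mul] at this
    have he : Real.exp (-(C t)) ≠ 0 := Real.exp_ne_zero _
    exact (mul_eq_zero.mp this).resolve_right he
  intro t
  have hcirc : (x t - xc)^2 + (y t - yc)^2 = r^2 := by
    have := hρz t; simp only [hρdef] at this; linarith
  refine ⟨hcirc, ?_⟩
  have hdx : deriv x t = r * (y t - yc) * cw := by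
    rw [(hx t).deriv, hcirc]; ring
  have hdy : deriv y t = -(r * (x t - xc) * cw) := by
    rw [(hy t).deriv, hcirc]; ring
  have hcw2 : cw^2 = 1 := by rcases hcw with h | h <;> rw [h] <;> ring
  rw [hdx, hdy]
  have : (r * (y t - yc) * cw)^2 + (-(r * (x t - xc) * cw))^2
      = r^2 * cw^2 * ((x t - xc)^2 + (y t - yc)^2) := by ring
  rw [this, hcw2, hcirc]; ring
end

section
/- Let (x,y) : ℝ → ℝ² be a differentiable solution of the arc lane-tracking vector field with gain p > 0. Then t ↦ ρ(t)² is nonincreasing, where ρ(t) = (x(t)−x_c)² + (y(t)−y_c)² − r²; indeed d/dt (ρ(t)²) = −16p·((x(t)−x_c)² + (y(t)−y_c)²)·ρ(t)² ≤ 0, so ρ² is a Lyapunov function for convergence to the target circle. -/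
/-- For any differentiable solution of the arc lane-tracking vector field with
gain `p > 0`, the squared radial error `ρ²` is nonincreasing: its derivative is
`-16 p ((x - xc)² + (y - yc)²) ρ² ≤ 0`, so `ρ²` is a Lyapunov function for
convergence to the target circle. -/
theorem arc_lane_squared_radial_error_lyapunov
    (xc yc r cw p : ℝ) (hr : 0 < r) (hcw : cw = 1 ∨ cw = -1) (hp : 0 < p)
    (x y : ℝ → ℝ)
    (hx : ∀ t, HasDerivAt x
      (r * (y t - yc) * cw
        - 4 * p * (x t - xc) * ((x t - xc)^2 + (y t - yc)^2 - r^2)) t)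
    (hy : ∀ t, HasDerivAt y
      (-(r * (x t - xc) * cw)
        - 4 * p * (y t - yc) * ((x t - xc)^2 + (y t - yc)^2 - r^2)) t) :
    Antitone (fun t => ((x t - xc)^2 + (y t - yc)^2 - r^2)^2) ∧
    ∀ t, HasDerivAt (fun s => ((x s - xc)^2 + (y s - yc)^2 - r^2)^2)
        (-16 * p * ((x t - xc)^2 + (y t - yc)^2)
          * ((x t - xc)^2 + (y t - yc)^2 - r^2)^2) t ∧
      -16 * p * ((x t - xc)^2 + (y t - yc)^2)
          * ((x t - xc)^2 + (y t - yc)^2 - r^2)^2 ≤ 0 := by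

  have hD : ∀ t, HasDerivAt (fun s => ((x s - xc)^2 + (y s - yc)^2 - r^2)^2)
      (-16 * p * ((x t - xc)^2 + (y t - yc)^2)
        * ((x t - xc)^2 + (y t - yc)^2 - r^2)^2) t := by
    intro t
    have h1 : HasDerivAt (fun s => ((x s - xc)^2 + (y s - yc)^2 - r^2)^2)
        (2 * ((x t - xc)^2 + (y t - yc)^2 - r^2)
          * (2 * (x t - xc) * (r * (y t - yc) * cw
              - 4 * p * (x t - xc) * ((x t - xc)^2 + (y t - yc)^2 - r^2))
            + 2 * (y t - yc) * (-(r * (x t - xc) * cw)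
              - 4 * p * (y t - yc) * ((x t - xc)^2 + (y t - yc)^2 - r^2)))) t := by
      have hxs : HasDerivAt (fun s => (x s - xc)^2)
          (2 * (x t - xc) * (r * (y t - yc) * cw
            - 4 * p * (x t - xc) * ((x t - xc)^2 + (y t - yc)^2 - r^2))) t := by
        have := ((hx t).sub_const xc).fun_pow 2
        simpa [mul_comm, mul_assoc, mul_left_comm] using this
      have hys : HasDerivAt (fun s => (y s - yc)^2)
          (2 * (y t - yc) * (-(r * (x t - xc) * cw)
            - 4 * p * (y t - yc) * ((x t - xc)^2 + (y t - yc)^2 - r^2))) t := by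
        have := ((hy t).sub_const yc).fun_pow 2
        simpa [mul_comm, mul_assoc, mul_left_comm] using this
      have hsum := (hxs.add hys).sub_const (r^2)
      have := hsum.fun_pow 2
      simpa [mul_comm, mul_assoc, mul_left_comm] using this
    convert h1 using 1
    ring
  have hle : ∀ t, -16 * p * ((x t - xc)^2 + (y t - yc)^2)
      * ((x t - xc)^2 + (y t - yc)^2 - r^2)^2 ≤ 0 := by
    intro t
    have h1 : (0:ℝ) ≤ (x t - xc)^2 + (y t - yc)^2 := by positivity
    have h2 : (0:ℝ) ≤ ((x t - xc)^2 + (y t - yc)^2 - r^2)^2 := sq_nonneg _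
    nlinarith [mul_nonneg h1 h2, hp.le, mul_nonneg hp.le (mul_nonneg h1 h2)]
  refine ⟨?_, fun t => ⟨hD t, hle t⟩⟩
  have hdiff : Differentiable ℝ (fun s => ((x s - xc)^2 + (y s - yc)^2 - r^2)^2) :=
    fun t => (hD t).differentiableAt
  apply antitone_of_deriv_nonpos hdiff
  intro t
  rw [(hD t).deriv]
  exact hle t
end

section
/- Let (x,y) : [0,∞) → ℝ² be a differentiable solution of the arc lane-tracking vector field with gain p > 0, defined for all t ≥ 0, whose initial point is not the center of the circle, i.e. (x(0),y(0)) ≠ (x_c,y_c). Then ρ(t) → 0 as t → ∞; that is, the distance from (x(t),y(t)) to the center (x_c,y_c) converges to the target radius r. -/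
/-- For a solution of the arc lane-tracking vector field with gain `p > 0`,
defined for all `t ≥ 0` and whose initial point is not the center of the circle,
the radial error `ρ t = (x t - xc)² + (y t - yc)² - r²` converges to `0` as
`t → ∞`; that is, the distance from `(x t, y t)` to the center converges to the
target radius `r`. -/
theorem arc_lane_radial_error_tendsto_zero
    (xc yc r cw p : ℝ) (hr : 0 < r) (hcw : cw = 1 ∨ cw = -1) (hp : 0 < p)
    (x y : ℝ → ℝ)
    (hx : ∀ t ∈ Set.Ici (0:ℝ), HasDerivAt x
      (r * (y t - yc) * cw
        - 4 * p * (x t - xc) * ((x t - xc)^2 + (y t - yc)^2 - r^2)) t)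
    (hy : ∀ t ∈ Set.Ici (0:ℝ), HasDerivAt y
      (-(r * (x t - xc) * cw)
        - 4 * p * (y t - yc) * ((x t - xc)^2 + (y t - yc)^2 - r^2)) t)
    (h0 : (x 0, y 0) ≠ (xc, yc)) :
    Filter.Tendsto (fun t => (x t - xc)^2 + (y t - yc)^2 - r^2)
      Filter.atTop (nhds 0) := by
  set g : ℝ → ℝ := fun t => (x t - xc)^2 + (y t - yc)^2 with hgdef
  -- derivative of g
  have hg : ∀ t ∈ Set.Ici (0:ℝ),
      HasDerivAt g (-8 * p * g t * (g t - r^2)) t := by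
    intro t ht
    have h1 := (((hx t ht).sub_const xc).pow 2).add (((hy t ht).sub_const yc).pow 2)
    convert h1 using 1
    · rfl
    · rfl
    · rfl
    simp only [hgdef, Nat.reduceSub, Nat.cast_ofNat, pow_one]
    ring
  have hgnonneg : ∀ t, 0 ≤ g t := fun t => by positivity
  have hgoal : (fun t => (x t - xc)^2 + (y t - yc)^2 - r^2) = fun t => g t - r^2 := by
    funext t; rw [hgdef]
  rw [hgoal]
  -- initial squared distance positive
  have hs0 : 0 < g 0 := by
    rcases (hgnonneg 0).lt_or_eq with h | h
    · exact h
    · exfalso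
      have h' : (x 0 - xc)^2 + (y 0 - yc)^2 = 0 := h.symm
      have h1 : (x 0 - xc)^2 ≤ 0 := by nlinarith [sq_nonneg (y 0 - yc)]
      have h2 : (y 0 - yc)^2 ≤ 0 := by nlinarith [sq_nonneg (x 0 - xc)]
      have hx0 : x 0 = xc := sub_eq_zero.1
        ((pow_eq_zero_iff (by norm_num : (2:ℕ) ≠ 0)).1 (le_antisymm h1 (sq_nonneg _)))
      have hy0 : y 0 = yc := sub_eq_zero.1
        ((pow_eq_zero_iff (by norm_num : (2:ℕ) ≠ 0)).1 (le_antisymm h2 (sq_nonneg _)))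
      exact h0 (by rw [hx0, hy0])
  set m : ℝ := min (g 0) (r^2) with hmdef
  have hm : 0 < m := lt_min hs0 (by positivity)
  have hmr : m ≤ r^2 := min_le_right _ _
  have hmg0 : m ≤ g 0 := min_le_left _ _
  have hcont : ∀ t ∈ Set.Ici (0:ℝ), ContinuousAt g t := fun t ht => (hg t ht).continuousAt
  clear_value g m
  clear hgdef hmdef hx hy h0
  -- lower bound: g t ≥ m on [0, ∞)
  have hlow : ∀ t ∈ Set.Ici (0:ℝ), m ≤ g t := by
    by_contra hcon
    push_neg at hcon
    obtain ⟨t1, ht1, hgt1⟩ := hcon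
    obtain ⟨m', hm'def⟩ : ∃ m' : ℝ, m' = (g t1 + m) / 2 := ⟨_, rfl⟩
    have hm'1 : g t1 < m' := by rw [hm'def]; linarith
    have hm'2 : m' < m := by rw [hm'def]; linarith
    set A : Set ℝ := Set.Icc 0 t1 ∩ g ⁻¹' Set.Ici m' with hAdef
    have hAne : A.Nonempty := ⟨0, ⟨le_refl 0, ht1⟩, le_trans hm'2.le hmg0⟩
    have hAbdd : BddAbove A := ⟨t1, fun s hs => hs.1.2⟩
    have hAclosed : IsClosed A := by
      refine ContinuousOn.preimage_isClosed_of_isClosed ?_ isClosed_Icc isClosed_Ici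
      exact fun s hs => (hcont s hs.1).continuousWithinAt
    obtain ⟨ts, htsdef⟩ : ∃ ts : ℝ, ts = sSup A := ⟨_, rfl⟩
    have htsA : ts ∈ A := htsdef ▸ hAclosed.csSup_mem hAne hAbdd
    have hts0 : 0 ≤ ts := htsA.1.1
    have htsm : m' ≤ g ts := htsA.2
    have htslt : ts < t1 := by
      rcases lt_or_eq_of_le htsA.1.2 with h | h
      · exact h
      · exfalso; rw [h] at htsm; linarith
    have hbelow : ∀ s ∈ Set.Ioo ts t1, g s < m' := by
      intro s hs
      by_contra hge
      push_neg at hge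
      have hsA : s ∈ A := ⟨⟨le_trans hts0 hs.1.le, hs.2.le⟩, hge⟩
      have := le_csSup hAbdd hsA
      rw [← htsdef] at this
      exact absurd this (not_le.2 hs.1)
    -- g is monotone on [ts, t1]
    have hmono : MonotoneOn g (Set.Icc ts t1) := by
      apply monotoneOn_of_deriv_nonneg (convex_Icc ts t1)
      · intro s hs
        exact (hcont s (le_trans hts0 hs.1)).continuousWithinAt
      · intro s hs
        rw [interior_Icc] at hs
        exact ((hg s (le_trans hts0 hs.1.le)).differentiableAt).differentiableWithinAt
      · intro s hs
        rw [interior_Icc] at hs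
        rw [(hg s (le_trans hts0 hs.1.le)).deriv]
        have h1 : g s < r^2 := lt_of_lt_of_le (lt_trans (hbelow s hs) hm'2) hmr
        have h2 : (0:ℝ) ≤ 8 * p * g s * (r^2 - g s) :=
          mul_nonneg (mul_nonneg (mul_nonneg (by norm_num) hp.le) (hgnonneg s))
            (by linarith)
        nlinarith [h2]
    have hle : g ts ≤ g t1 :=
      hmono (Set.left_mem_Icc.2 htslt.le) (Set.right_mem_Icc.2 htslt.le) htslt.le
    linarith
  -- Lyapunov: F t = (g t - r^2)^2 * exp (K t) is antitone on [0, ∞)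
  obtain ⟨K, hKdef⟩ : ∃ K : ℝ, K = 16 * p * m := ⟨_, rfl⟩
  have hK : 0 < K := by rw [hKdef]; positivity
  set F : ℝ → ℝ := fun t => (g t - r^2)^2 * Real.exp (K * t) with hFdef
  have hF : ∀ t ∈ Set.Ici (0:ℝ), HasDerivAt F
      ((2 * (g t - r^2) * (-8 * p * g t * (g t - r^2))) * Real.exp (K * t)
        + (g t - r^2)^2 * (Real.exp (K * t) * K)) t := by
    intro t ht
    have h1 : HasDerivAt (fun t => (g t - r^2)^2)
        (2 * (g t - r^2) * (-8 * p * g t * (g t - r^2))) t := by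
      have := ((hg t ht).sub_const (r^2)).pow 2
      convert this using 1
      · rfl
      · rfl
      · rfl
      simp only [Nat.reduceSub, Nat.cast_ofNat, pow_one]
    have h2 : HasDerivAt (fun t => Real.exp (K * t)) (Real.exp (K * t) * K) t := by
      have := ((hasDerivAt_id t).const_mul K).exp
      simpa using this
    exact h1.mul h2
  have hanti : AntitoneOn F (Set.Ici 0) := by
    apply antitoneOn_of_deriv_nonpos (convex_Ici 0)
    · exact fun s hs => ((hF s hs).continuousAt).continuousWithinAt
    · intro s hs
      rw [interior_Ici] at hs
      exact ((hF s (Set.mem_Ici.2 hs.le)).differentiableAt).differentiableWithinAt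
    · intro s hs
      rw [interior_Ici] at hs
      rw [(hF s (Set.mem_Ici.2 hs.le)).deriv]
      have hgm := hlow s (Set.mem_Ici.2 hs.le)
      have hexp : 0 < Real.exp (K * s) := Real.exp_pos _
      have h16 : 16 * p * m ≤ 16 * p * g s :=
        mul_le_mul_of_nonneg_left hgm (by positivity)
      have key : (2 * (g s - r^2) * (-8 * p * g s * (g s - r^2)))
          + (g s - r^2)^2 * K ≤ 0 := by
        have hfac : (g s - r^2)^2 * (K - 16 * p * g s) ≤ 0 :=
          mul_nonpos_of_nonneg_of_nonpos (sq_nonneg _) (by rw [hKdef]; linarith)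
        nlinarith [hfac]
      have := mul_nonneg (neg_nonneg.2 key) hexp.le
      nlinarith [this]
  -- hence (g t - r^2)^2 ≤ (g 0 - r^2)^2 * exp (-K t)
  have hbound : ∀ t ∈ Set.Ici (0:ℝ),
      (g t - r^2)^2 ≤ (g 0 - r^2)^2 * Real.exp (-K * t) := by
    intro t ht
    have h1 : F t ≤ F 0 := hanti (Set.mem_Ici.2 (le_refl 0)) ht ht
    have h2 : F 0 = (g 0 - r^2)^2 := by rw [hFdef]; simp
    have h3 : (g t - r^2)^2 = F t * Real.exp (-K * t) := by
      rw [hFdef]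
      have he : K * t + -K * t = 0 := by ring
      rw [mul_assoc, ← Real.exp_add, he, Real.exp_zero, mul_one]
    rw [h3]
    calc F t * Real.exp (-K * t) ≤ F 0 * Real.exp (-K * t) :=
          mul_le_mul_of_nonneg_right h1 (Real.exp_pos _).le
      _ = (g 0 - r^2)^2 * Real.exp (-K * t) := by rw [h2]
  -- absolute-value bound
  have habs : ∀ t ∈ Set.Ici (0:ℝ),
      |g t - r^2| ≤ |g 0 - r^2| * Real.exp (-(K/2) * t) := by
    intro t ht
    have hb := hbound t ht
    have hBnn : 0 ≤ |g 0 - r^2| * Real.exp (-(K/2) * t) := by positivity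
    have he : -(K/2) * t + -(K/2) * t = -K * t := by ring
    have h2 : Real.exp (-(K/2) * t) ^ 2 = Real.exp (-K * t) := by
      rw [pow_two, ← Real.exp_add, he]
    have hsq : (|g 0 - r^2| * Real.exp (-(K/2) * t))^2
        = (g 0 - r^2)^2 * Real.exp (-K * t) := by
      rw [mul_pow, sq_abs, h2]
    exact abs_le_of_sq_le_sq (by rw [hsq]; exact hb) hBnn
  -- the bound tends to 0
  have hBtend : Filter.Tendsto (fun t => |g 0 - r^2| * Real.exp (-(K/2) * t))
      Filter.atTop (nhds 0) := by
    have h1 : Filter.Tendsto (fun t : ℝ => (K/2) * t) Filter.atTop Filter.atTop :=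
      Filter.Tendsto.const_mul_atTop (by positivity) Filter.tendsto_id
    have h2 : Filter.Tendsto (fun t : ℝ => Real.exp (-(K/2) * t))
        Filter.atTop (nhds 0) := by
      have hb : Filter.Tendsto (fun t : ℝ => -(K/2 * t)) Filter.atTop Filter.atBot :=
        Filter.tendsto_neg_atBot_iff.mpr h1
      have h3 := Real.tendsto_exp_atBot.comp hb
      exact h3.congr fun t => by simp [Function.comp, neg_mul]
    simpa using h2.const_mul (|g 0 - r^2|)
  -- squeeze
  have hneg : Filter.Tendsto (fun t => -(|g 0 - r^2| * Real.exp (-(K/2) * t)))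
      Filter.atTop (nhds 0) := by simpa using hBtend.neg
  apply tendsto_of_tendsto_of_tendsto_of_le_of_le' hneg hBtend
  · filter_upwards [Filter.eventually_ge_atTop (0:ℝ)] with t ht
    have h := abs_le.1 (habs t ht)
    linarith [h.1]
  · filter_upwards [Filter.eventually_ge_atTop (0:ℝ)] with t ht
    have h := abs_le.1 (habs t ht)
    linarith [h.2]
end
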